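/- Under consistency and ignorability, with a nonnegative discrete outcome, the weighted sum of marginal probabilities of causation dominates the difference of conditional means: Σ_{y ∈ L} y · P(Y₀ ≠ y and Y₁ = y) ≥ E[Y | Z = z] − E[Y | Z ≠ z]. -/

import Mathlib

open MeasureTheory ProbabilityTheory

lemma integral_eq_sum_finset_aux {Ω : Type*} [MeasurableSpace Ω] (ν : Measure Ω)
    [IsFiniteMeasure ν] (L : Finset ℝ) (Y : Ω → ℝ) (hYm : Measurable Y)
    (hYL : ∀ ω, Y ω ∈ L) :
    ∫ ω, Y ω ∂ν = ∑ y ∈ L, y * (ν {ω | Y ω = y}).toReal := by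
  have h : ∀ ω, Y ω = ∑ y ∈ L, Set.indicator {ω | Y ω = y} (fun _ => y) ω := by
    intro ω
    rw [Finset.sum_eq_single (Y ω)]
    · simp [Set.indicator_of_mem, Set.mem_setOf_eq]
    · intro b _ hb
      apply Set.indicator_of_notMem
      simp only [Set.mem_setOf_eq]
      exact fun h => hb h.symm
    · intro h; exact absurd (hYL ω) h
  calc ∫ ω, Y ω ∂ν = ∫ ω, ∑ y ∈ L, Set.indicator {ω | Y ω = y} (fun _ => y) ω ∂ν := by
        simp_rw [← h]
    _ = ∑ y ∈ L, ∫ ω, Set.indicator {ω | Y ω = y} (fun _ => y) ω ∂ν := by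
        apply integral_finset_sum
        intro y _
        exact (integrable_const y).indicator (hYm (measurableSet_singleton y))
    _ = ∑ y ∈ L, y * (ν {ω | Y ω = y}).toReal := by
        refine Finset.sum_congr rfl fun y _ => ?_
        rw [integral_indicator_const (μ := ν) y
          (show MeasurableSet {ω | Y ω = y} from hYm (measurableSet_singleton y))]
        simp [mul_comm, Measure.real]

/-- Under consistency and ignorability, with a nonnegative discrete outcome, the
weighted sum of marginal probabilities of causation dominates the difference of
conditional means:
`Σ_{y ∈ L} y · P(Y₀ ≠ y ∧ Y₁ = y) ≥ E[Y | Z = z] − E[Y | Z ≠ z]`. -/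
theorem mpoc_weighted_sum_ge_conditional_mean_difference
    {Ω 𝒵 : Type*} [MeasurableSpace Ω]
    (μ : Measure Ω) [IsProbabilityMeasure μ]
    (L : Finset ℝ) (hL : ∀ x ∈ L, 0 ≤ x)
    (Z : Ω → 𝒵) (z : 𝒵)
    (Y Y1 Y0 : Ω → ℝ)
    (hYm : Measurable Y) (hY1m : Measurable Y1) (hY0m : Measurable Y0)
    (hYL : ∀ ω, Y ω ∈ L) (hY1L : ∀ ω, Y1 ω ∈ L) (hY0L : ∀ ω, Y0 ω ∈ L)
    (hmZ : MeasurableSet {ω | Z ω = z})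
    (hpos : 0 < μ {ω | Z ω = z}) (hlt : μ {ω | Z ω = z} < 1)
    (hcons1 : ∀ ω, Z ω = z → Y ω = Y1 ω)
    (hcons0 : ∀ ω, Z ω ≠ z → Y ω = Y0 ω)
    (hind1 : ∀ y' ∈ L,
      μ ({ω | Y1 ω = y'} ∩ {ω | Z ω = z}) = μ {ω | Y1 ω = y'} * μ {ω | Z ω = z})
    (hind0 : ∀ y' ∈ L,
      μ ({ω | Y0 ω = y'} ∩ {ω | Z ω = z}) = μ {ω | Y0 ω = y'} * μ {ω | Z ω = z}) :
    (∫ ω, Y ω ∂(μ[|{ω | Z ω = z}])) - (∫ ω, Y ω ∂(μ[|{ω | Z ω ≠ z}]))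
      ≤ ∑ y ∈ L, y * (μ {ω | Y0 ω ≠ y ∧ Y1 ω = y}).toReal := by
  set s := {ω | Z ω = z} with hs
  have hsc : {ω | Z ω ≠ z} = sᶜ := rfl
  have hmsc : MeasurableSet sᶜ := hmZ.compl
  have hs0 : μ s ≠ 0 := hpos.ne'
  have hstop : μ s ≠ ⊤ := (measure_lt_top μ s).ne
  have hsc0 : μ sᶜ ≠ 0 := by
    rw [prob_compl_eq_one_sub hmZ]
    exact fun h => absurd (tsub_eq_zero_iff_le.mp h) (not_le.mpr hlt)
  have : IsProbabilityMeasure (μ[|s]) := cond_isProbabilityMeasure hs0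
  have : IsProbabilityMeasure (μ[|sᶜ]) := cond_isProbabilityMeasure hsc0
  -- conditional probabilities
  have key1 : ∀ y ∈ L, (μ[|s]) {ω | Y ω = y} = μ {ω | Y1 ω = y} := by
    intro y hy
    rw [cond_apply hmZ]
    have hset : s ∩ {ω | Y ω = y} = {ω | Y1 ω = y} ∩ s := by
      ext ω
      simp only [Set.mem_inter_iff, Set.mem_setOf_eq, hs]
      constructor
      · rintro ⟨hz, hYy⟩; exact ⟨(hcons1 ω hz) ▸ hYy, hz⟩
      · rintro ⟨hYy, hz⟩; exact ⟨hz, (hcons1 ω hz) ▸ hYy⟩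
    rw [hset, hind1 y hy, ← mul_assoc, mul_comm (μ s)⁻¹, mul_assoc,
      ENNReal.inv_mul_cancel hs0 hstop, mul_one]
  have key0 : ∀ y ∈ L, (μ[|sᶜ]) {ω | Y ω = y} = μ {ω | Y0 ω = y} := by
    intro y hy
    rw [cond_apply hmsc]
    have hset : sᶜ ∩ {ω | Y ω = y} = {ω | Y0 ω = y} ∩ sᶜ := by
      ext ω
      simp only [Set.mem_inter_iff, Set.mem_setOf_eq, Set.mem_compl_iff, hs]
      constructor
      · rintro ⟨hz, hYy⟩; exact ⟨(hcons0 ω hz) ▸ hYy, hz⟩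
      · rintro ⟨hYy, hz⟩; exact ⟨hz, (hcons0 ω hz) ▸ hYy⟩
    have hcompl : μ ({ω | Y0 ω = y} ∩ sᶜ) = μ {ω | Y0 ω = y} * μ sᶜ := by
      have hsplit : μ ({ω | Y0 ω = y} ∩ s) + μ ({ω | Y0 ω = y} \ s) = μ {ω | Y0 ω = y} :=
        measure_inter_add_diff _ hmZ
      have hdiff : {ω | Y0 ω = y} \ s = {ω | Y0 ω = y} ∩ sᶜ := rfl
      have htot : μ s + μ sᶜ = 1 := prob_add_prob_compl hmZ
      have hrhs : μ {ω | Y0 ω = y} * μ s + μ {ω | Y0 ω = y} * μ sᶜ = μ {ω | Y0 ω = y} := by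
        rw [← mul_add, htot, mul_one]
      have := hsplit.trans hrhs.symm
      rw [hdiff, hind0 y hy] at this
      exact (ENNReal.add_right_inj (ENNReal.mul_ne_top (measure_ne_top μ _) hstop)).mp this
    rw [hset, hcompl, ← mul_assoc, mul_comm (μ sᶜ)⁻¹, mul_assoc,
      ENNReal.inv_mul_cancel hsc0 (measure_ne_top μ _), mul_one]
  rw [hsc, integral_eq_sum_finset_aux (μ[|s]) L Y hYm hYL,
    integral_eq_sum_finset_aux (μ[|sᶜ]) L Y hYm hYL, ← Finset.sum_sub_distrib]
  apply Finset.sum_le_sum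
  intro y hy
  rw [key1 y hy, key0 y hy, ← mul_sub]
  apply mul_le_mul_of_nonneg_left _ (hL y hy)
  rw [sub_le_iff_le_add]
  have hsub : {ω | Y1 ω = y} ⊆ {ω | Y0 ω ≠ y ∧ Y1 ω = y} ∪ {ω | Y0 ω = y} := by
    intro ω hω
    by_cases h0 : Y0 ω = y
    · exact Or.inr h0
    · exact Or.inl ⟨h0, hω⟩
  have hmeas : μ {ω | Y1 ω = y} ≤ μ {ω | Y0 ω ≠ y ∧ Y1 ω = y} + μ {ω | Y0 ω = y} :=
    le_trans (measure_mono hsub) (measure_union_le _ _)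
  have := ENNReal.toReal_mono (by
    exact ENNReal.add_ne_top.mpr ⟨measure_ne_top μ _, measure_ne_top μ _⟩) hmeas
  rwa [ENNReal.toReal_add (measure_ne_top μ _) (measure_ne_top μ _)] at this
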